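/- Given a pushout square of chain complexes of abelian groups with horizontal maps degreewise injective and composed horizontally with another such pushout square whose map to the pushout is a quasi-isomorphism, the horizontal composite square again has the property that the canonical map from the pushout is a quasi-isomorphism. Precisely: if squares (A→B→E over C→D→F) commute, the maps C∪_A B → D and D∪_B E → F are quasi-isomorphisms, and A→B, B→E, C→D, D→F are degreewise injective, then C∪_A E → F is a quasi-isomorphism. -/

import Mathlib

open CategoryTheory Limits

namespace ComposedSquareAux

open HomologicalComplex

attribute [local simp] pushout.inl_desc pushout.inr_desc pushout.inl_desc_assoc pushout.inr_desc_assoc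

variable {B E X Y : ChainComplex AddCommGrpCat ℤ}

/-- The short complex `B ⟶ X ⊞ E ⟶ X ∪_B E`. -/
@[simps]
noncomputable def pushSes (u : B ⟶ X) (v : B ⟶ E) : ShortComplex (ChainComplex AddCommGrpCat ℤ) :=
  ShortComplex.mk (biprod.lift u (-v)) (biprod.desc (pushout.inl u v) (pushout.inr u v))
    (by simp [pushout.condition])

/-- The projection `X ⊞ E ⟶ X ∪_B E` is a cokernel of `B ⟶ X ⊞ E`. -/
noncomputable def isColimitPushCofork (u : B ⟶ X) (v : B ⟶ E) :
    IsColimit (CokernelCofork.ofπ (pushSes u v).g (pushSes u v).zero) :=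
  CokernelCofork.IsColimit.ofπ _ _
    (fun {Z} k hk => pushout.desc (biprod.inl ≫ k) (biprod.inr ≫ k) (by
      simp only [pushSes_f] at hk
      erw [biprod.lift_eq, Preadditive.add_comp, Category.assoc, Category.assoc,
        Preadditive.neg_comp, add_neg_eq_zero] at hk
      exact hk))
    (fun {Z} k hk => by apply biprod.hom_ext' <;> simp [pushSes] <;> [exact pushout.inl_desc _ _ _; exact pushout.inr_desc _ _ _])
    (fun {Z} k hk m hm => by
      apply pushout.hom_ext
      · have h : pushout.inl u v = biprod.inl ≫ (pushSes u v).g := by simp [pushSes]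
        erw [h, Category.assoc, hm]
        simp; erw [biprod.inl_desc, pushout.inl_desc]
      · have h : pushout.inr u v = biprod.inr ≫ (pushSes u v).g := by simp [pushSes]
        erw [h, Category.assoc, hm]
        simp; erw [biprod.inr_desc, pushout.inr_desc])

lemma pushSes_shortExact (u : B ⟶ X) (v : B ⟶ E) [Mono v] : (pushSes u v).ShortExact := by
  have hiso : IsIso (-𝟙 E) := ⟨-𝟙 E, by simp, by simp⟩
  haveI : Mono (-v) := by
    have h : -v = v ≫ (-𝟙 E) := by simp
    rw [h]
    haveI := hiso
    exact mono_comp _ _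
  haveI hm : Mono (pushSes u v).f := by
    have h : (pushSes u v).f ≫ biprod.snd = -v := by simp [pushSes]
    haveI : Mono ((pushSes u v).f ≫ biprod.snd) := by rw [h]; exact this
    exact mono_of_mono _ biprod.snd
  obtain ⟨hex, hepi⟩ := (pushSes u v).exact_and_epi_g_iff_g_is_cokernel.2
    ⟨isColimitPushCofork u v⟩
  haveI := hepi
  exact ⟨hex⟩

lemma quasiIso_biprod_map {X Y X' Y' : ChainComplex AddCommGrpCat ℤ} (q : X ⟶ Y) (r : X' ⟶ Y')
    [QuasiIso q] [QuasiIso r] : QuasiIso (biprod.map q r) := by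
  rw [quasiIso_iff]
  intro n
  rw [quasiIsoAt_iff_isIso_homologyMap]
  set F := homologyFunctor AddCommGrpCat (ComplexShape.down ℤ) n with hF
  haveI : PreservesBinaryBiproducts F := preservesBinaryBiproducts_of_preservesBiproducts F
  have h : F.map (biprod.map q r) =
      ((F.mapBiprod X X').hom ≫ biprod.map (F.map q) (F.map r)) ≫ (F.mapBiprod Y Y').inv := by
    rw [Iso.eq_comp_inv]
    apply biprod.hom_ext
    · simp only [Functor.mapBiprod_hom, Category.assoc, biprod.lift_fst, biprod.map_fst,
        biprod.lift_fst_assoc]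
      rw [← F.map_comp, ← F.map_comp, biprod.map_fst]
    · simp only [Functor.mapBiprod_hom, Category.assoc, biprod.lift_snd, biprod.map_snd,
        biprod.lift_snd_assoc]
      rw [← F.map_comp, ← F.map_comp, biprod.map_snd]
  have hq : IsIso (F.map q) := by
    rw [hF]
    simp only [homologyFunctor_map]
    exact (quasiIsoAt_iff_isIso_homologyMap q n).1 inferInstance
  have hr : IsIso (F.map r) := by
    rw [hF]
    simp only [homologyFunctor_map]
    exact (quasiIsoAt_iff_isIso_homologyMap r n).1 inferInstance
  have hmap : IsIso (biprod.map (F.map q) (F.map r)) := by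
    have : biprod.map (F.map q) (F.map r) = (biprod.mapIso (asIso (F.map q))
      (asIso (F.map r))).hom := rfl
    rw [this]
    infer_instance
  show IsIso (F.map (biprod.map q r))
  rw [h]
  infer_instance

/-- The morphism of short exact sequences. -/
@[simps]
noncomputable def pushMor (u₁ : B ⟶ X) (u₂ : B ⟶ Y) (v : B ⟶ E) (q : X ⟶ Y)
    (hq : u₁ ≫ q = u₂) : pushSes u₁ v ⟶ pushSes u₂ v where
  τ₁ := 𝟙 B
  τ₂ := biprod.map q (𝟙 E)
  τ₃ := pushout.map u₁ v u₂ v q (𝟙 E) (𝟙 B) (by simp [hq]) (by simp)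
  comm₁₂ := by apply biprod.hom_ext <;> simp [pushSes, hq]
  comm₂₃ := by apply biprod.hom_ext' <;> simp [pushSes]

/-- The gluing lemma: the pushout of a quasi-isomorphism along a cofibration
is a quasi-isomorphism. -/
lemma quasiIso_pushout_map (u₁ : B ⟶ X) (u₂ : B ⟶ Y) (v : B ⟶ E) [Mono v] (q : X ⟶ Y)
    [QuasiIso q] (hq : u₁ ≫ q = u₂) :
    QuasiIso (pushout.map u₁ v u₂ v q (𝟙 E) (𝟙 B) (by simp [hq]) (by simp)) := by
  have h1 := pushSes_shortExact u₁ v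
  have h2 := pushSes_shortExact u₂ v
  haveI hτ₁ : QuasiIso (pushMor u₁ u₂ v q hq).τ₁ := by
    rw [pushMor_τ₁]
    exact quasiIso_of_isIso (𝟙 B)
  haveI hτ₂ : QuasiIso (pushMor u₁ u₂ v q hq).τ₂ := by
    rw [pushMor_τ₂]; exact quasiIso_biprod_map q (𝟙 E)
  exact HomologySequence.quasiIso_τ₃ (pushMor u₁ u₂ v q hq) h1 h2 hτ₁ hτ₂

end ComposedSquareAux

open ComposedSquareAux HomologicalComplex

attribute [local simp] pushout.inl_desc pushout.inr_desc pushout.inl_desc_assoc pushout.inr_desc_assoc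

/-- Horizontal composition of pushout squares of chain complexes: if the canonical maps
`C ∪_A B → D` and `D ∪_B E → F` are quasi-isomorphisms (the horizontal maps being
degreewise injective), then the canonical map `C ∪_A E → F` from the pushout of the
horizontally composed square is a quasi-isomorphism. -/
theorem composed_square_quasiIso
    (A B C D E F : ChainComplex AddCommGrpCat ℤ)
    (i : A ⟶ B) (j : B ⟶ E) (a : A ⟶ C) (b : B ⟶ D) (e : E ⟶ F)
    (c : C ⟶ D) (d : D ⟶ F)
    (hi : ∀ n, Function.Injective (i.f n))
    (hj : ∀ n, Function.Injective (j.f n))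
    (hc : ∀ n, Function.Injective (c.f n))
    (hd : ∀ n, Function.Injective (d.f n))
    (w1 : a ≫ c = i ≫ b) (w2 : b ≫ d = j ≫ e)
    (w3 : a ≫ (c ≫ d) = (i ≫ j) ≫ e)
    (h1 : QuasiIso (pushout.desc c b w1))
    (h2 : QuasiIso (pushout.desc d e w2)) :
    QuasiIso (pushout.desc (c ≫ d) e w3) := by
  haveI : Mono j := mono_of_mono_f _ (fun n => (AddCommGrpCat.mono_iff_injective _).2 (hj n))
  have hb : pushout.inr a i ≫ pushout.desc c b w1 = b := pushout.inr_desc _ _ _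
  haveI hφ : QuasiIso (pushout.map (pushout.inr a i) j b j (pushout.desc c b w1) (𝟙 E) (𝟙 B)
      (by simp [hb]) (by simp)) :=
    quasiIso_pushout_map (pushout.inr a i) b j (pushout.desc c b w1) hb
  have key : pushout.desc (c ≫ d) e w3 =
      (pushoutLeftPushoutInrIso a i j).inv ≫
        pushout.map (pushout.inr a i) j b j (pushout.desc c b w1) (𝟙 E) (𝟙 B)
          (by simp [hb]) (by simp) ≫ pushout.desc d e w2 := by
    apply pushout.hom_ext
    · rw [pushout.inl_desc, inl_pushoutLeftPushoutInrIso_inv_assoc]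
      simp
    · rw [pushout.inr_desc, inr_pushoutLeftPushoutInrIso_inv_assoc]
      simp
  rw [key]
  infer_instance
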